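/- arXiv:2108.03038 — 2 statements merged into one kernel-verified Lean document; each statement's English description precedes it below -/
import Mathlib

section
/- (Abelian property, configuration version) If α and β are two legal toppling sequences for the same configuration η with equal toppling counts, m_α = m_β as functions V → ℕ, then the resulting configurations agree: Φ_α η = Φ_β η. -/
/-- A particle configuration: `a x` active particles, `i x` inactive particles at site `x`. -/
structure Config (V : Type*) where
  a : V → ℕ
  i : V → ℕ

namespace ARW

variable {V : Type*} [DecidableEq V]

/-- The state-space constraint: no site holds both active and inactive particles. -/
def InOmega (η : Config V) : Prop := ∀ x, η.a x = 0 ∨ η.i x = 0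

/-- The sleep operator `τ^{x,s}` with capacities `w`. -/
def sleepOp (w : V → ℕ) (x : V) (η : Config V) : Config V where
  a z := if z = x then (if η.a x ≤ w x then 0 else η.a x) else η.a z
  i z := if z = x then (if η.a x ≤ w x then η.a x else 0) else η.i z

/-- The jump operator `τ^{x,y}` with capacities `w`. -/
def jumpOp (w : V → ℕ) (x y : V) (η : Config V) : Config V where
  a z := if z = x then η.a x - 1
    else if z = y then
      (if η.i y = 0 then η.a y + 1 else if η.i y + 1 ≤ w y then 0 else η.i y + 1)
    else η.a z
  i z := if z = x then 0
    else if z = y then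
      (if η.i y = 0 then 0 else if η.i y + 1 ≤ w y then η.i y + 1 else 0)
    else η.i z

end ARW

namespace ARW

variable {V : Type*} [DecidableEq V]

/-- A stack of instructions: at each site `x` and index `j`, either a sleep
instruction (`none`) or a jump instruction towards `some y`. -/
abbrev Stack (V : Type*) := V → ℕ → Option V

/-- A stack is valid for the graph `G` if jump instructions point to neighbours. -/
def ValidStack (G : SimpleGraph V) (τ : Stack V) : Prop :=
  ∀ x j y, τ x j = some y → G.Adj x y

/-- Apply a single instruction at site `x`. -/
def applyInstr (w : V → ℕ) (x : V) : Option V → Config V → Config V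
  | none => sleepOp w x
  | some y => jumpOp w x y

/-- Topple site `x`: use the next unused instruction of its stack and
increase the toppling counter. -/
def topple (w : V → ℕ) (τ : Stack V) (x : V) (s : Config V × (V → ℕ)) :
    Config V × (V → ℕ) :=
  (applyInstr w x (τ x (s.2 x)) s.1, Function.update s.2 x (s.2 x + 1))

/-- Apply a sequence of topplings (`Φ_α`). -/
def toppleSeq (w : V → ℕ) (τ : Stack V) : List V → Config V × (V → ℕ) → Config V × (V → ℕ)
  | [], s => s
  | x :: l, s => toppleSeq w τ l (topple w τ x s)

/-- A toppling sequence is legal if each toppled site is unstable at the moment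
it is toppled. -/
def Legal (w : V → ℕ) (τ : Stack V) : List V → Config V × (V → ℕ) → Prop
  | [], _ => True
  | x :: l, s => 0 < s.1.a x ∧ Legal w τ l (topple w τ x s)

/-- A configuration is stable in `K` if it has no unstable site of `K`. -/
def StableIn (K : Finset V) (η : Config V) : Prop := ∀ x ∈ K, η.a x = 0

end ARW


namespace ARW
variable {V : Type*} [DecidableEq V]

lemma Config.ext' {η η' : Config V} (ha : ∀ z, η.a z = η'.a z)
    (hi : ∀ z, η.i z = η'.i z) : η = η' := by
  cases η; cases η'; simp only [Config.mk.injEq]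
  exact ⟨funext ha, funext hi⟩

/-- A local operator at site `p`. -/
def localOp (p : V) (f g : ℕ → ℕ → ℕ) (η : Config V) : Config V where
  a := Function.update η.a p (f (η.a p) (η.i p))
  i := Function.update η.i p (g (η.a p) (η.i p))

def sF (w : V → ℕ) (x : V) : ℕ → ℕ → ℕ := fun a _ => if a ≤ w x then 0 else a
def sG (w : V → ℕ) (x : V) : ℕ → ℕ → ℕ := fun a _ => if a ≤ w x then a else 0
def dF (w : V → ℕ) (y : V) : ℕ → ℕ → ℕ :=
  fun a i => if i = 0 then a + 1 else if i + 1 ≤ w y then 0 else i + 1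
def dG (w : V → ℕ) (y : V) : ℕ → ℕ → ℕ :=
  fun _ i => if i = 0 then 0 else if i + 1 ≤ w y then i + 1 else 0
def cF : ℕ → ℕ → ℕ := fun a _ => a - 1
def cG : ℕ → ℕ → ℕ := fun _ _ => 0

lemma localOp_a_ne {p q : V} (hpq : p ≠ q) (f g : ℕ → ℕ → ℕ) (η : Config V) :
    (localOp q f g η).a p = η.a p := Function.update_of_ne hpq _ _

lemma localOp_i_ne {p q : V} (hpq : p ≠ q) (f g : ℕ → ℕ → ℕ) (η : Config V) :
    (localOp q f g η).i p = η.i p := Function.update_of_ne hpq _ _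

lemma localOp_comm {p q : V} (hpq : p ≠ q) (f g f' g' : ℕ → ℕ → ℕ) (η : Config V) :
    localOp p f g (localOp q f' g' η) = localOp q f' g' (localOp p f g η) := by
  apply Config.ext' <;> intro z <;>
    simp only [localOp, Function.update, eq_rec_constant, dite_eq_ite] <;>
    rcases eq_or_ne z p with hzp | hzp <;> rcases eq_or_ne z q with hzq | hzq <;>
    simp_all [Ne.symm hpq]

lemma sleep_eq (w : V → ℕ) (x : V) (η : Config V) :
    sleepOp w x η = localOp x (sF w x) (sG w x) η := by
  apply Config.ext' <;> intro z <;>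
    simp only [sleepOp, localOp, sF, sG, Function.update, eq_rec_constant, dite_eq_ite]

lemma jump_self (w : V → ℕ) (x : V) (η : Config V) :
    jumpOp w x x η = localOp x cF cG η := by
  apply Config.ext' <;> intro z <;>
    simp only [jumpOp, localOp, cF, cG, Function.update, eq_rec_constant, dite_eq_ite] <;>
    split_ifs <;> rfl

lemma jump_eq (w : V → ℕ) {x t : V} (htx : t ≠ x) (η : Config V) :
    jumpOp w x t η = localOp t (dF w t) (dG w t) (localOp x cF cG η) := by
  apply Config.ext' <;> intro z <;>
    simp only [jumpOp, localOp, cF, cG, dF, dG, Function.update, eq_rec_constant,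
      dite_eq_ite] <;>
    rcases eq_or_ne z x with hzx | hzx <;> rcases eq_or_ne z t with hzt | hzt <;>
    simp_all [Ne.symm htx]

/-- same-site commutation: sleep and deposit. -/
lemma sleep_dep_same (w : V → ℕ) (p : V) (η : Config V)
    (hi : η.i p = 0) (ha : 0 < η.a p) :
    localOp p (sF w p) (sG w p) (localOp p (dF w p) (dG w p) η) =
      localOp p (dF w p) (dG w p) (localOp p (sF w p) (sG w p) η) := by
  apply Config.ext' <;> intro z <;>
    simp only [localOp, sF, sG, dF, dG, Function.update, eq_rec_constant, dite_eq_ite] <;>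
    rcases eq_or_ne z p with hzp | hzp <;>
    simp_all <;> first | omega | (split_ifs <;> omega)

/-- same-site commutation: decrement and deposit. -/
lemma dec_dep_same (w : V → ℕ) (p : V) (η : Config V)
    (hi : η.i p = 0) (ha : 0 < η.a p) :
    localOp p cF cG (localOp p (dF w p) (dG w p) η) =
      localOp p (dF w p) (dG w p) (localOp p cF cG η) := by
  apply Config.ext' <;> intro z <;>
    simp only [localOp, cF, cG, dF, dG, Function.update, eq_rec_constant, dite_eq_ite] <;>
    rcases eq_or_ne z p with hzp | hzp <;>
    simp_all <;> first | omega | (split_ifs <;> omega)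

lemma sleep_sleepX (w : V → ℕ) {x y : V} (η : Config V) (hxy : x ≠ y) :
    sleepOp w x (sleepOp w y η) = sleepOp w y (sleepOp w x η) := by
  simp only [sleep_eq]; exact localOp_comm hxy _ _ _ _ _

lemma sleep_jumpX (w : V → ℕ) {x y t : V} (η : Config V) (hxy : x ≠ y)
    (hix : η.i x = 0) (hx : 0 < η.a x) :
    sleepOp w x (jumpOp w y t η) = jumpOp w y t (sleepOp w x η) := by
  rcases eq_or_ne t y with h | hty
  · rw [h]; simp only [jump_self, sleep_eq]; exact localOp_comm hxy _ _ _ _ _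
  · simp only [jump_eq w hty, sleep_eq]
    rcases eq_or_ne t x with h | htx
    · -- t = x : sleep_x ∘ dep_x ∘ dec_y  =  dep_x ∘ dec_y ∘ sleep_x
      rw [h]
      rw [sleep_dep_same w x (localOp y cF cG η)
          (by rw [localOp_i_ne hxy]; exact hix)
          (by rw [localOp_a_ne hxy]; exact hx),
        localOp_comm hxy]
    · rw [localOp_comm htx.symm, localOp_comm hxy]

lemma jump_jumpX (w : V → ℕ) {x y t u : V} (η : Config V) (hxy : x ≠ y)
    (hix : η.i x = 0) (hiy : η.i y = 0) (hx : 0 < η.a x) (hy : 0 < η.a y) :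
    jumpOp w x t (jumpOp w y u η) = jumpOp w y u (jumpOp w x t η) := by
  have hiy' : ∀ ξ : Config V, ξ.i y = 0 → (localOp x cF cG ξ).i y = 0 := fun ξ h => by
    rw [localOp_i_ne (Ne.symm hxy)]; exact h
  rcases eq_or_ne t x with h1 | htx <;> rcases eq_or_ne u y with h2 | huy
  · rw [h1, h2]; simp only [jump_self]; exact localOp_comm hxy _ _ _ _ _
  · -- t = x, u ≠ y : C_x (D_u (C_y η)) = D_u (C_y (C_x η))
    rw [h1]; simp only [jump_self, jump_eq w huy]
    rcases eq_or_ne u x with h3 | hux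
    · rw [h3]
      rw [dec_dep_same w x (localOp y cF cG η)
          (by rw [localOp_i_ne hxy]; exact hix)
          (by rw [localOp_a_ne hxy]; exact hx),
        localOp_comm hxy]
    · rw [localOp_comm hux.symm, localOp_comm hxy]
  · -- t ≠ x, u = y : D_t (C_x (C_y η)) = C_y (D_t (C_x η))
    rw [h2]; simp only [jump_self, jump_eq w htx]
    rcases eq_or_ne t y with h3 | hty
    · rw [h3]
      rw [localOp_comm hxy, ← dec_dep_same w y (localOp x cF cG η)
          (by rw [localOp_i_ne (Ne.symm hxy)]; exact hiy)
          (by rw [localOp_a_ne (Ne.symm hxy)]; exact hy)]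
    · rw [localOp_comm hxy, localOp_comm hty.symm]
  · -- generic case
    simp only [jump_eq w htx, jump_eq w huy]
    have h1 : localOp x cF cG (localOp u (dF w u) (dG w u) (localOp y cF cG η)) =
        localOp u (dF w u) (dG w u) (localOp y cF cG (localOp x cF cG η)) := by
      rcases eq_or_ne u x with h3 | hux
      · rw [h3]
        rw [dec_dep_same w x (localOp y cF cG η)
            (by rw [localOp_i_ne hxy]; exact hix)
            (by rw [localOp_a_ne hxy]; exact hx),
          localOp_comm hxy]
      · rw [localOp_comm hux.symm, localOp_comm hxy]
    rw [h1]
    have h2 : localOp t (dF w t) (dG w t) (localOp y cF cG (localOp x cF cG η)) =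
        localOp y cF cG (localOp t (dF w t) (dG w t) (localOp x cF cG η)) := by
      rcases eq_or_ne t y with h4 | hty
      · rw [h4]
        exact (dec_dep_same w y (localOp x cF cG η)
          (by rw [localOp_i_ne (Ne.symm hxy)]; exact hiy)
          (by rw [localOp_a_ne (Ne.symm hxy)]; exact hy)).symm
      · exact localOp_comm hty _ _ _ _ _
    rcases eq_or_ne t u with h5 | htu
    · rw [h5] at h2 ⊢; rw [h2]
    · rw [localOp_comm htu, h2]
lemma instr_comm (w : V → ℕ) {x y : V} (I J : Option V) (η : Config V)
    (hxy : x ≠ y) (hΩ : InOmega η) (hx : 0 < η.a x) (hy : 0 < η.a y) :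
    applyInstr w x I (applyInstr w y J η) = applyInstr w y J (applyInstr w x I η) := by
  have hix : η.i x = 0 := by rcases hΩ x with h | h <;> omega
  have hiy : η.i y = 0 := by rcases hΩ y with h | h <;> omega
  cases I <;> cases J <;> simp only [applyInstr]
  · exact sleep_sleepX w η hxy
  · exact sleep_jumpX w η hxy hix hx
  · exact (sleep_jumpX w η hxy.symm hiy hy).symm
  · exact jump_jumpX w η hxy hix hiy hx hy

lemma instr_omega (w : V → ℕ) (x : V) (I : Option V) (η : Config V)
    (hΩ : InOmega η) : InOmega (applyInstr w x I η) := by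
  intro z
  cases I <;> simp only [applyInstr, sleepOp, jumpOp] <;> split_ifs <;>
    first | (left; rfl) | (right; rfl) | omega | exact hΩ z

lemma instr_pos (w : V → ℕ) {x y : V} (I : Option V) (η : Config V)
    (hxy : y ≠ x) (hΩ : InOmega η) (hx : 0 < η.a x) :
    0 < (applyInstr w y I η).a x := by
  have hix : η.i x = 0 := by rcases hΩ x with h | h <;> omega
  cases I <;> simp only [applyInstr, sleepOp, jumpOp] <;> split_ifs <;>
    first | omega | (simp_all; omega) | simp_all

lemma topple_omega (w : V → ℕ) (τ : Stack V) (x : V) (s : Config V × (V → ℕ))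
    (hΩ : InOmega s.1) : InOmega (topple w τ x s).1 :=
  instr_omega w x _ s.1 hΩ

lemma topple_pos (w : V → ℕ) (τ : Stack V) {x y : V} (s : Config V × (V → ℕ))
    (hxy : y ≠ x) (hΩ : InOmega s.1) (hx : 0 < s.1.a x) :
    0 < (topple w τ y s).1.a x :=
  instr_pos w _ s.1 hxy hΩ hx

lemma topple_comm (w : V → ℕ) (τ : Stack V) {x y : V} (s : Config V × (V → ℕ))
    (hxy : x ≠ y) (hΩ : InOmega s.1) (hx : 0 < s.1.a x) (hy : 0 < s.1.a y) :
    topple w τ x (topple w τ y s) = topple w τ y (topple w τ x s) := by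
  unfold topple
  simp only [Function.update_of_ne hxy, Function.update_of_ne (Ne.symm hxy)]
  refine Prod.ext ?_ ?_
  · exact instr_comm w _ _ s.1 hxy hΩ hx hy
  · simp only
    exact Function.update_comm (Ne.symm hxy) _ _ _

lemma move_front (w : V → ℕ) (τ : Stack V) :
    ∀ (β : List V) (s : Config V × (V → ℕ)) (x : V), InOmega s.1 →
      Legal w τ β s → 0 < s.1.a x → x ∈ β →
      Legal w τ (x :: β.erase x) s ∧
        toppleSeq w τ (x :: β.erase x) s = toppleSeq w τ β s := by
  intro β
  induction β with
  | nil => intro s x _ _ _ h; simp at h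
  | cons y l ih =>
    intro s x hΩ hleg hx hmem
    rcases eq_or_ne y x with rfl | hyx
    · simp only [List.erase_cons_head]
      exact ⟨hleg, trivial⟩
    · have hmem' : x ∈ l := by
        rcases List.mem_cons.mp hmem with h | h
        · exact absurd h.symm hyx
        · exact h
      have hy : 0 < s.1.a y := hleg.1
      have hΩ' : InOmega (topple w τ y s).1 := topple_omega w τ y s hΩ
      have hx' : 0 < (topple w τ y s).1.a x := topple_pos w τ s hyx hΩ hx
      obtain ⟨hleg', heq'⟩ := ih (topple w τ y s) x hΩ' hleg.2 hx' hmem'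
      have herase : (y :: l).erase x = y :: l.erase x := by
        rw [List.erase_cons_tail]
        simp [hyx]
      have hcomm : topple w τ y (topple w τ x s) = topple w τ x (topple w τ y s) :=
        (topple_comm w τ s (Ne.symm hyx) hΩ hx hy).symm
      constructor
      · refine ⟨hx, ?_⟩
        rw [herase]
        refine ⟨topple_pos w τ s (Ne.symm hyx) hΩ hy, ?_⟩
        show Legal w τ (l.erase x) (topple w τ y (topple w τ x s))
        rw [hcomm]
        exact hleg'.2
      · rw [herase]
        show toppleSeq w τ (l.erase x) (topple w τ y (topple w τ x s)) =
          toppleSeq w τ l (topple w τ y s)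
        rw [hcomm]
        exact heq'

lemma key (w : V → ℕ) (τ : Stack V) :
    ∀ (α β : List V) (s : Config V × (V → ℕ)), InOmega s.1 →
      Legal w τ α s → Legal w τ β s → (∀ x, α.count x = β.count x) →
      toppleSeq w τ α s = toppleSeq w τ β s := by
  intro α
  induction α with
  | nil =>
    intro β s _ _ _ hm
    have : β = [] := by
      refine List.eq_nil_iff_forall_not_mem.mpr fun x hx => ?_
      have := hm x
      simp only [List.count_nil] at this
      exact absurd (List.count_pos_iff.mpr hx) (by omega)
    subst this; rfl
  | cons x l ih =>
    intro β s hΩ hα hβ hm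
    have hxβ : x ∈ β := by
      have := hm x
      simp only [List.count_cons_self] at this
      exact List.count_pos_iff.mp (by omega)
    obtain ⟨hlegβ, heqβ⟩ := move_front w τ β s x hΩ hβ hα.1 hxβ
    have hcounts : ∀ z, l.count z = (β.erase x).count z := by
      intro z
      have h1 := hm z
      rw [List.count_erase]
      rcases eq_or_ne z x with rfl | hzx
      · simp only [List.count_cons_self] at h1
        simp only [beq_self_eq_true, if_true]
        omega
      · simp only [List.count_cons_of_ne hzx.symm] at h1
        simp [Ne.symm hzx, h1]
    have := ih (β.erase x) (topple w τ x s) (topple_omega w τ x s hΩ) hα.2 hlegβ.2 hcounts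
    show toppleSeq w τ l (topple w τ x s) = _
    rw [this, ← heqβ]
    rfl
end ARW

open ARW in
/-- Abelian property, configuration version: two legal toppling sequences for the
same configuration with equal toppling counts produce the same configuration. -/
theorem abelian_config {V : Type*} [DecidableEq V] (G : SimpleGraph V)
    (w : V → ℕ) (τ : Stack V) (hτ : ValidStack G τ)
    (η : Config V) (hΩ : InOmega η) (α β : List V)
    (hα : Legal w τ α (η, fun _ => 0)) (hβ : Legal w τ β (η, fun _ => 0))
    (hm : ∀ x, α.count x = β.count x) :
    (toppleSeq w τ α (η, fun _ => 0)).1 = (toppleSeq w τ β (η, fun _ => 0)).1 :=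
  congrArg Prod.fst (key w τ α β (η, fun _ => 0) hΩ hα hβ hm)
end

section
/- (Propagation of infinite topplings) Fix an environment w : V → ℕ and i.i.d. instruction stacks where at each site each instruction is independently a jump to a fixed neighbour with probability 1/(d(1+λ)) > 0. Almost surely, for any two vertices x, y: if the total odometer satisfies m_V(x) = ∞, then m_V(y) = ∞. (In particular the event of fixation does not depend on the choice of the observed vertex.) -/
namespace ARW

variable {V : Type*} [DecidableEq V]

/-- The total odometer `m_V(x)`: the supremum, over all legal toppling
sequences for `η` (equivalently, over stabilisations of larger and larger
finite volumes), of the number of topplings at `x`. -/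
noncomputable def totalOdometer (w : V → ℕ) (τ : Stack V) (η : Config V) (x : V) : ℕ∞ :=
  ⨆ α : {l : List V // Legal w τ l (η, fun _ => 0)}, ((α : List V).count x : ℕ∞)

end ARW

namespace ARW

variable {V : Type*} [DecidableEq V]

/- ### Auxiliary lemmas -/

theorem toppleSeq_append (w : V → ℕ) (τ : Stack V) (l₁ l₂ : List V) (s : Config V × (V → ℕ)) :
    toppleSeq w τ (l₁ ++ l₂) s = toppleSeq w τ l₂ (toppleSeq w τ l₁ s) := by
  induction l₁ generalizing s with
  | nil => rfl
  | cons a l ih => rw [List.cons_append, toppleSeq, toppleSeq, ih]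

theorem legal_append {w : V → ℕ} {τ : Stack V} {l₁ l₂ : List V} {s : Config V × (V → ℕ)} :
    Legal w τ (l₁ ++ l₂) s ↔ Legal w τ l₁ s ∧ Legal w τ l₂ (toppleSeq w τ l₁ s) := by
  induction l₁ generalizing s with
  | nil => simp [Legal, toppleSeq]
  | cons a l ih => simp [Legal, toppleSeq, ih, and_assoc]

theorem toppleSeq_snd (w : V → ℕ) (τ : Stack V) (l : List V) (s : Config V × (V → ℕ)) (z : V) :
    (toppleSeq w τ l s).2 z = s.2 z + l.count z := by
  induction l generalizing s with
  | nil => simp [toppleSeq]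
  | cons a l ih =>
    rw [toppleSeq, ih, List.count_cons]
    simp only [topple, Function.update]
    rcases eq_or_ne z a with h | h
    · subst h; simp; omega
    · rw [dif_neg h]
      simp [Ne.symm h]

/-- Number of jump-to-`y` instructions among the first `n` instructions at `x`. -/
def arrivals (τ : Stack V) (x y : V) (n : ℕ) [DecidablePred fun k => τ x k = some y] : ℕ :=
  ((Finset.range n).filter fun k => τ x k = some y).card

end ARW

namespace ARW

variable {V : Type*} [DecidableEq V]

/-- Number of jump-to-`y` instructions among the first `n` instructions at `x`. -/
def arrivalsCnt (τ : Stack V) (x y : V) (n : ℕ) : ℕ :=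
  ((Finset.range n).filter fun k => τ x k = some y).card

theorem arrivalsCnt_succ (τ : Stack V) (x y : V) (n : ℕ) :
    arrivalsCnt τ x y (n + 1) =
      arrivalsCnt τ x y n + if τ x n = some y then 1 else 0 := by
  rw [arrivalsCnt, arrivalsCnt, Finset.range_add_one, Finset.filter_insert]
  split
  · rw [Finset.card_insert_of_notMem (by simp)]
  · rfl

theorem arrivalsCnt_mono (τ : Stack V) (x y : V) {n m : ℕ} (h : n ≤ m) :
    arrivalsCnt τ x y n ≤ arrivalsCnt τ x y m :=
  Finset.card_le_card (Finset.filter_subset_filter _ (Finset.range_subset_range.2 h))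

theorem inOmega_sleepOp (w : V → ℕ) (z : V) {c : Config V} (hΩ : InOmega c) :
    InOmega (sleepOp w z c) := by
  intro v
  by_cases hv : v = z
  · subst hv; simp only [sleepOp, if_pos rfl]; split_ifs <;> simp
  · simpa [sleepOp, hv] using hΩ v

theorem inOmega_jumpOp (w : V → ℕ) (z u : V) {c : Config V} (hΩ : InOmega c) :
    InOmega (jumpOp w z u c) := by
  intro v
  by_cases h1 : v = z
  · subst h1; simp [jumpOp]
  · by_cases h2 : v = u
    · subst h2; simp only [jumpOp, if_neg h1]; split_ifs <;> simp
    · simpa [jumpOp, h1, h2] using hΩ v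

/-- The invariant propagated along legal toppling sequences. -/
def Inv (w : V → ℕ) (τ : Stack V) (η : Config V) (x y : V)
    (s : Config V × (V → ℕ)) : Prop :=
  InOmega s.1 ∧ s.1.i y ≤ max (η.i y) (w y) ∧
    arrivalsCnt τ x y (s.2 x) ≤ s.1.a y + s.1.i y + s.2 y

theorem inv_topple (w : V → ℕ) (τ : Stack V) (η : Config V) {x y : V} (hxy : x ≠ y)
    {s : Config V × (V → ℕ)} (hs : Inv w τ η x y s) {z : V} (hz : 0 < s.1.a z) :
    Inv w τ η x y (topple w τ z s) := by
  obtain ⟨hΩ, hiy, harr⟩ := hs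
  have hzi : s.1.i z = 0 := by
    rcases hΩ z with h | h
    · omega
    · exact h
  rcases hΩ y with h0 | h0 <;>
  · rcases hinstr : τ z (s.2 z) with _ | u <;>
      simp only [topple, hinstr]
    · -- sleep instruction
      refine ⟨inOmega_sleepOp w z hΩ, ?_, ?_⟩
      · by_cases hyz : y = z
        · subst hyz
          simp [applyInstr, sleepOp]
          split_ifs <;> omega
        · simpa [applyInstr, sleepOp, hyz] using hiy
      · dsimp only
        by_cases hzx : z = x
        · subst hzx
          rw [Function.update_self, arrivalsCnt_succ, hinstr,
            Function.update_of_ne (Ne.symm hxy)]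
          simp [applyInstr, sleepOp, Ne.symm hxy]
          omega
        · rw [Function.update_of_ne (Ne.symm hzx)]
          by_cases hyz : y = z
          · subst hyz
            rw [Function.update_self]
            simp [applyInstr, sleepOp]
            split_ifs <;> omega
          · rw [Function.update_of_ne hyz]
            simp [applyInstr, sleepOp, hyz]
            omega
    · -- jump instruction towards u
      refine ⟨inOmega_jumpOp w z u hΩ, ?_, ?_⟩
      · by_cases hyz : y = z
        · subst hyz
          simp [applyInstr, jumpOp]
        · by_cases hyu : y = u
          · subst hyu
            simp [applyInstr, jumpOp, hyz]
            split_ifs <;> omega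
          · simp only [applyInstr, jumpOp]
            simp [hyz, hyu]
            omega
      · dsimp only
        by_cases hzx : z = x
        · subst hzx
          rw [Function.update_self, arrivalsCnt_succ, hinstr,
            Function.update_of_ne (Ne.symm hxy)]
          by_cases hyu : y = u
          · subst hyu
            simp [applyInstr, jumpOp, Ne.symm hxy]
            split_ifs <;> omega
          · simp [applyInstr, jumpOp, Ne.symm hxy, hyu, Ne.symm hyu]
            omega
        · rw [Function.update_of_ne (Ne.symm hzx)]
          by_cases hyz : y = z
          · subst hyz
            rw [Function.update_self]
            simp [applyInstr, jumpOp]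
            omega
          · rw [Function.update_of_ne hyz]
            by_cases hyu : y = u
            · subst hyu
              simp [applyInstr, jumpOp, hyz]
              split_ifs <;> omega
            · simp [applyInstr, jumpOp, hyz, hyu]
              omega

theorem inv_toppleSeq (w : V → ℕ) (τ : Stack V) (η : Config V) {x y : V} (hxy : x ≠ y) :
    ∀ (l : List V) (s : Config V × (V → ℕ)), Legal w τ l s → Inv w τ η x y s →
      Inv w τ η x y (toppleSeq w τ l s)
  | [], s, _, hs => hs
  | z :: l, s, hleg, hs =>
    inv_toppleSeq w τ η hxy l _ hleg.2 (inv_topple w τ η hxy hs hleg.1)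

theorem legal_replicate (w : V → ℕ) (τ : Stack V) (y : V) :
    ∀ (t : ℕ) (s : Config V × (V → ℕ)), w y + t ≤ s.1.a y →
      Legal w τ (List.replicate t y) s
  | 0, _, _ => trivial
  | t + 1, s, h => by
    rw [List.replicate_succ]
    refine ⟨by omega, ?_⟩
    apply legal_replicate w τ y t
    rcases hinstr : τ y (s.2 y) with _ | u <;> simp only [topple, hinstr]
    · have hne : ¬ s.1.a y ≤ w y := by omega
      simp [applyInstr, sleepOp, hne]
      omega
    · simp [applyInstr, jumpOp]
      omega

theorem totalOdometer_eq_top_iff (w : V → ℕ) (τ : Stack V) (η : Config V) (z : V) :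
    totalOdometer w τ η z = ⊤ ↔
      ∀ M : ℕ, ∃ l : List V, Legal w τ l (η, fun _ => 0) ∧ M ≤ l.count z := by
  rw [totalOdometer, iSup_eq_top]
  constructor
  · intro h M
    obtain ⟨⟨l, hl⟩, hlt⟩ := h (M : ℕ∞) (by simp [lt_top_iff_ne_top])
    exact ⟨l, hl, by exact_mod_cast hlt.le⟩
  · intro h b hb
    lift b to ℕ using hb.ne
    obtain ⟨l, hl, hc⟩ := h (b + 1)
    exact ⟨⟨l, hl⟩, by exact_mod_cast Nat.lt_of_lt_of_le (Nat.lt_succ_self b) hc⟩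

/-- The key deterministic propagation lemma: if the stack at `x` contains
infinitely many jump-to-`y` instructions and `x` topples infinitely often,
then so does `y`. -/
theorem propagate (w : V → ℕ) (τ : Stack V) (η : Config V) (hΩ : InOmega η) {x y : V}
    (hxy : x ≠ y) (hinf : {j | τ x j = some y}.Infinite)
    (hx : totalOdometer w τ η x = ⊤) : totalOdometer w τ η y = ⊤ := by
  rw [totalOdometer_eq_top_iff] at hx ⊢
  intro M
  set B := max (η.i y) (w y) with hB
  obtain ⟨T, hTsub, hTcard⟩ := hinf.exists_subset_card_eq (B + M + w y + M)
  set J := (T.sup id) + 1 with hJdef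
  have hJ : B + M + w y + M ≤ arrivalsCnt τ x y J := by
    rw [← hTcard, arrivalsCnt]
    apply Finset.card_le_card
    intro k hk
    simp only [Finset.mem_filter, Finset.mem_range]
    exact ⟨Nat.lt_succ_of_le (Finset.le_sup (f := id) hk), hTsub hk⟩
  obtain ⟨l, hl, hcnt⟩ := hx J
  by_cases hcy : M ≤ l.count y
  · exact ⟨l, hl, hcy⟩
  · push_neg at hcy
    have hinv : Inv w τ η x y (toppleSeq w τ l (η, fun _ => 0)) :=
      inv_toppleSeq w τ η hxy l _ hl ⟨hΩ, le_max_left _ _, by simp [arrivalsCnt]⟩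
    set s := toppleSeq w τ l (η, fun _ => 0) with hs
    obtain ⟨hΩ', hiy', harr'⟩ := hinv
    have hcx : s.2 x = l.count x := by rw [hs, toppleSeq_snd]; simp
    have hcyc : s.2 y = l.count y := by rw [hs, toppleSeq_snd]; simp
    have hA : B + M + w y + M ≤ arrivalsCnt τ x y (s.2 x) :=
      le_trans hJ (arrivalsCnt_mono τ x y (by omega))
    have hay : w y + M ≤ s.1.a y := by omega
    refine ⟨l ++ List.replicate M y, ?_, ?_⟩
    · rw [legal_append]
      exact ⟨hl, legal_replicate w τ y M _ hay⟩
    · have : (l ++ List.replicate M y).count y = l.count y + M := by simp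
      omega

end ARW

namespace ARW

variable {V : Type*} [DecidableEq V]

theorem propagate_walk (w : V → ℕ) (τ : Stack V) (η : Config V) (hΩ : InOmega η)
    {G : SimpleGraph V}
    (hgood : ∀ a b : V, G.Adj a b → {j | τ a j = some b}.Infinite)
    {x y : V} (wk : G.Walk x y) :
    totalOdometer w τ η x = ⊤ → totalOdometer w τ η y = ⊤ := by
  induction wk with
  | nil => exact id
  | cons h p ih =>
    exact fun hx => ih (propagate w τ η hΩ h.ne (hgood _ _ h) hx)

end ARW


open ARW MeasureTheory ProbabilityTheory in
/-- Propagation of infinite topplings: with i.i.d. instruction stacks in which,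
at every site, each instruction is a jump towards any fixed neighbour with
probability `1/(d(1+λ)) > 0`, almost surely, for any two vertices `x, y`, if
the total odometer at `x` is infinite then so is the total odometer at `y`. -/
theorem propagation_of_infinite_topplings {V : Type*} [DecidableEq V] [Countable V]
    (G : SimpleGraph V) (hpre : G.Preconnected) (d : ℕ) (hd : 0 < d)
    (hdeg : ∀ v : V, (G.neighborSet v).ncard = d)
    {Ωs : Type*} [MeasurableSpace Ωs] (P : Measure Ωs) [IsProbabilityMeasure P]
    (lam : ℝ) (hlam : 0 < lam)
    (τ : Ωs → Stack V)
    (hmeas : ∀ x j, Measurable[_, ⊤] fun ω => τ ω x j)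
    (hindep : iIndepFun (m := fun _ : V × ℕ => (⊤ : MeasurableSpace (Option V)))
      (fun p ω => τ ω p.1 p.2) P)
    (hjump : ∀ x j y, G.Adj x y →
      P {ω | τ ω x j = some y} = ENNReal.ofReal (1 / (d * (1 + lam))))
    (w : V → ℕ) (η : Config V) (hΩ : InOmega η) :
    ∀ᵐ ω ∂P, ∀ x y : V,
      totalOdometer w (τ ω) η x = ⊤ → totalOdometer w (τ ω) η y = ⊤ := by
  classical
  have key : ∀ x y : V, G.Adj x y → ∀ᵐ ω ∂P, {j | τ ω x j = some y}.Infinite := by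
    intro x y hadj
    set s : ℕ → Set Ωs := fun j => (fun ω => τ ω x j) ⁻¹' {some y} with hsdef
    have hsm : ∀ j, MeasurableSet (s j) :=
      fun j => hmeas x j MeasurableSpace.measurableSet_top
    have hind : iIndepSet s P := by
      rw [iIndepSet_iff_meas_biInter hsm]
      intro S
      set e : ℕ ↪ V × ℕ := ⟨fun j => (x, j), fun a b h => by simpa using h⟩ with he
      have h := hindep.measure_inter_preimage_eq_mul (S.map e)
        (sets := fun _ => ({some y} : Set (Option V)))
        (fun _ _ => MeasurableSpace.measurableSet_top)
      rw [Finset.prod_map] at h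
      simp only [he, Function.Embedding.coeFn_mk] at h
      have hset : (⋂ p ∈ S.map e, (fun ω => τ ω p.1 p.2) ⁻¹' ({some y} : Set (Option V)))
          = ⋂ j ∈ S, s j := by
        ext ω
        simp only [Set.mem_iInter, Finset.mem_map, he, Function.Embedding.coeFn_mk, hsdef,
          Set.mem_preimage, Set.mem_singleton_iff]
        constructor
        · intro h' j hj
          exact h' (x, j) ⟨j, hj, rfl⟩
        · rintro h' p ⟨j, hj, rfl⟩
          exact h' j hj
      rw [hset] at h
      exact h
    have hp : (0:ℝ) < 1 / (d * (1 + lam)) := by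
      have hd' : (0:ℝ) < d := by exact_mod_cast hd
      have : (0:ℝ) < (d:ℝ) * (1 + lam) := by nlinarith
      positivity
    have hsum : (∑' j, P (s j)) = (⊤ : ENNReal) := by
      have hc : ∀ j, P (s j) = ENNReal.ofReal (1 / (d * (1 + lam))) := by
        intro j
        have := hjump x j y hadj
        exact this
      rw [tsum_congr hc]
      exact ENNReal.tsum_const_eq_top_of_ne_zero (ENNReal.ofReal_pos.2 hp).ne'
    have h1 := measure_limsup_eq_one hsm hind hsum
    have hms : MeasurableSet (Filter.limsup s Filter.atTop) := MeasurableSet.measurableSet_limsup hsm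
    have h2 : ∀ᵐ ω ∂P, ω ∈ Filter.limsup s Filter.atTop := by
      rw [ae_iff]
      have h0 : P ((Filter.limsup s Filter.atTop)ᶜ) = 0 := by
        rw [measure_compl hms (measure_ne_top P _), h1]; simp
      exact h0
    filter_upwards [h2] with ω hω
    rw [Filter.mem_limsup_iff_frequently_mem] at hω
    exact Nat.frequently_atTop_iff_infinite.1 hω
  have hgood : ∀ᵐ ω ∂P, ∀ p : {p : V × V // G.Adj p.1 p.2},
      {j | τ ω p.1.1 j = some p.1.2}.Infinite := by
    rw [ae_all_iff]
    exact fun p => key p.1.1 p.1.2 p.2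
  filter_upwards [hgood] with ω hω x y hx
  obtain ⟨wk⟩ := hpre x y
  exact propagate_walk w (τ ω) η hΩ (fun a b hab => hω ⟨(a, b), hab⟩) wk hx
end
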